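/- Let σ = Cone(v_1,…,v_s) ⊆ ℝ^n be a rational polyhedral cone, i.e. v_1,…,v_s ∈ ℤ^n. Then its polar cone σ∨ = {u ∈ (ℝ^n)* : ⟨u,v⟩ ≤ 0 for all v ∈ σ} is again a rational polyhedral cone: there exist finitely many u_1,…,u_r ∈ ℤ^n (identified with integral linear functionals) such that σ∨ = Cone(u_1,…,u_r). -/

import Mathlib

open Topology
open scoped Classical

noncomputable section

/-- The standard pairing `⟨u, v⟩ = ∑ i, u i * v i` on `ℝⁿ`. -/
def dotp {n : ℕ} (u v : Fin n → ℝ) : ℝ := ∑ i, u i * v i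

/-- The polyhedral cone generated by the vectors `v 0, …, v (s-1)`. -/
def coneOf {n s : ℕ} (v : Fin s → (Fin n → ℝ)) : Set (Fin n → ℝ) :=
  {x | ∃ lam : Fin s → ℝ, (∀ j, 0 ≤ lam j) ∧ x = ∑ j, lam j • v j}

/-- A set is a polyhedral cone if it is finitely generated. -/
def IsPolyCone {n : ℕ} (σ : Set (Fin n → ℝ)) : Prop :=
  ∃ (s : ℕ) (v : Fin s → (Fin n → ℝ)), σ = coneOf v

/-- The polar cone `σ∨ = {u | ⟨u,v⟩ ≤ 0 ∀ v ∈ σ}`. -/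
def polarCone {n : ℕ} (σ : Set (Fin n → ℝ)) : Set (Fin n → ℝ) :=
  {u | ∀ v ∈ σ, dotp u v ≤ 0}

/-- A cone is pointed if it contains no nonzero linear subspace. -/
def IsPointed {n : ℕ} (σ : Set (Fin n → ℝ)) : Prop :=
  ∀ W : Submodule ℝ (Fin n → ℝ), (W : Set (Fin n → ℝ)) ⊆ σ → W = ⊥

/-- The partial compactification `N_ℝ(σ)`: the set of `ℝ₊`-equivariant monoid morphisms
`φ : σ∨ → ℝ ∪ {-∞}`, realized as `EReal`-valued functions on `σ∨` never taking the
value `+∞`.  (In `EReal` one has `(0 : EReal) * ⊥ = 0`, which is the convention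
`0 · (-∞) = 0`.)  It is topologized as a subspace of the product
`σ∨ → EReal`, i.e. with the topology of pointwise convergence. -/
def NRc {n : ℕ} (σ : Set (Fin n → ℝ)) : Set (↥(polarCone σ) → EReal) :=
  {φ | (∀ u, φ u ≠ ⊤) ∧
    (∀ (u u' : ↥(polarCone σ)) (h : (u : Fin n → ℝ) + (u' : Fin n → ℝ) ∈ polarCone σ),
      φ ⟨(u : Fin n → ℝ) + (u' : Fin n → ℝ), h⟩ = φ u + φ u') ∧
    (∀ (c : ℝ), 0 ≤ c → ∀ (u : ↥(polarCone σ)) (h : c • (u : Fin n → ℝ) ∈ polarCone σ),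
      φ ⟨c • (u : Fin n → ℝ), h⟩ = (c : EReal) * φ u)}

/-- The canonical map `N_ℝ → (σ∨ → EReal)`, `v ↦ (u ↦ ⟨u,v⟩)`; its image lies in `N_ℝ(σ)`. -/
def jmap {n : ℕ} (σ : Set (Fin n → ℝ)) (v : Fin n → ℝ) : ↥(polarCone σ) → EReal :=
  fun u => ((dotp (u : Fin n → ℝ) v : ℝ) : EReal)


/-- The real vector associated to an integer vector. -/
def intCastVec {n : ℕ} (u : Fin n → ℤ) : Fin n → ℝ := fun i => (u i : ℝ)


namespace Aux

variable {n : ℕ}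

def coneOf' {n : ℕ} {ι : Type} [Fintype ι] (v : ι → (Fin n → ℝ)) : Set (Fin n → ℝ) :=
  {x | ∃ lam : ι → ℝ, (∀ j, 0 ≤ lam j) ∧ x = ∑ j, lam j • v j}

lemma coneOf_eq {s : ℕ} (v : Fin s → (Fin n → ℝ)) : coneOf v = coneOf' v := rfl

lemma coneOf'_reindex {r : ℕ} {ι : Type} [Fintype ι] (g : ι → Fin n → ℝ)
    (e : Fin r ≃ ι) : coneOf (fun j => g (e j)) = coneOf' g := by
  ext x
  constructor
  · rintro ⟨lam, h1, rfl⟩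
    refine ⟨fun i => lam (e.symm i), fun i => h1 _, ?_⟩
    rw [← e.sum_comp (fun i => lam (e.symm i) • g i)]
    simp
  · rintro ⟨lam, h1, rfl⟩
    refine ⟨fun j => lam (e j), fun j => h1 _, ?_⟩
    rw [← e.sum_comp (fun i => lam i • g i)]

lemma dotp_comm (u v : Fin n → ℝ) : dotp u v = dotp v u := by
  simp [dotp, mul_comm]

lemma dotp_zero_left (a : Fin n → ℝ) : dotp 0 a = 0 := by simp [dotp]

lemma dotp_add_left (x y a : Fin n → ℝ) : dotp (x + y) a = dotp x a + dotp y a := by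
  simp [dotp, add_mul, Finset.sum_add_distrib]

lemma dotp_smul_left (c : ℝ) (x a : Fin n → ℝ) : dotp (c • x) a = c * dotp x a := by
  simp [dotp, Finset.mul_sum, mul_assoc]

lemma dotp_sum_left {ι : Type} [Fintype ι] (lam : ι → ℝ) (w : ι → Fin n → ℝ) (a : Fin n → ℝ) :
    dotp (∑ j, lam j • w j) a = ∑ j, lam j * dotp (w j) a := by
  unfold dotp
  simp only [Finset.sum_apply, Pi.smul_apply, smul_eq_mul, Finset.sum_mul, Finset.mul_sum]
  rw [Finset.sum_comm]
  exact Finset.sum_congr rfl fun j _ => Finset.sum_congr rfl fun i _ => by ring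

lemma zero_mem_coneOf' {ι : Type} [Fintype ι] (w : ι → Fin n → ℝ) : (0 : Fin n → ℝ) ∈ coneOf' w :=
  ⟨0, fun _ => le_refl _, by simp⟩

lemma gen_mem_coneOf' {ι : Type} [Fintype ι] (w : ι → Fin n → ℝ) (k : ι) : w k ∈ coneOf' w := by
  refine ⟨fun k' => if k' = k then 1 else 0, fun k' => by dsimp only; split <;> norm_num, ?_⟩
  rw [Finset.sum_eq_single k] <;> simp +contextual

lemma add_mem_coneOf' {ι : Type} [Fintype ι] {w : ι → Fin n → ℝ} {x y : Fin n → ℝ}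
    (hx : x ∈ coneOf' w) (hy : y ∈ coneOf' w) : x + y ∈ coneOf' w := by
  obtain ⟨l1, h1, rfl⟩ := hx
  obtain ⟨l2, h2, rfl⟩ := hy
  exact ⟨l1 + l2, fun j => add_nonneg (h1 j) (h2 j), by
    rw [← Finset.sum_add_distrib]
    exact Finset.sum_congr rfl fun j _ => (add_smul _ _ _).symm⟩

lemma smul_mem_coneOf' {ι : Type} [Fintype ι] {w : ι → Fin n → ℝ} {c : ℝ} {x : Fin n → ℝ}
    (hc : 0 ≤ c) (hx : x ∈ coneOf' w) : c • x ∈ coneOf' w := by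
  obtain ⟨l1, h1, rfl⟩ := hx
  exact ⟨fun j => c * l1 j, fun j => mul_nonneg hc (h1 j), by
    rw [Finset.smul_sum]
    exact Finset.sum_congr rfl fun j _ => smul_smul _ _ _⟩

lemma coneOf'_subset {ι κ : Type} [Fintype ι] [Fintype κ] {g : ι → Fin n → ℝ}
    {w : κ → Fin n → ℝ} (h : ∀ j, g j ∈ coneOf' w) : coneOf' g ⊆ coneOf' w := by
  rintro x ⟨mu, hmu, rfl⟩
  exact Finset.sum_induction _ (· ∈ coneOf' w) (fun _ _ => add_mem_coneOf') (zero_mem_coneOf' w)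
    (fun j _ => smul_mem_coneOf' (hmu j) (h j))


lemma cut {ι : Type} [Fintype ι] (w : ι → Fin n → ℝ) (a : Fin n → ℝ) :
    coneOf' w ∩ {x | dotp x a ≤ 0} =
      coneOf' (Sum.elim
        (fun k => if dotp (w k) a ≤ 0 then w k else 0)
        (fun p : ι × ι => if 0 < dotp (w p.1) a ∧ dotp (w p.2) a < 0 then
            (-(dotp (w p.2) a)) • w p.1 + (dotp (w p.1) a) • w p.2 else 0)) := by
  apply Set.Subset.antisymm
  · rintro x ⟨⟨lam, hlam, rfl⟩, hx⟩
    rw [Set.mem_setOf_eq, dotp_sum_left] at hx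
    set d : ι → ℝ := fun k => dotp (w k) a with hd
    set S : ℝ := ∑ k, if 0 < d k then lam k * d k else 0 with hS
    set T : ℝ := ∑ k, if d k < 0 then lam k * (-(d k)) else 0 with hT
    have hS0 : 0 ≤ S := Finset.sum_nonneg fun k _ => by
      split_ifs with h
      · exact mul_nonneg (hlam k) h.le
      · exact le_refl 0
    have hT0 : 0 ≤ T := Finset.sum_nonneg fun k _ => by
      split_ifs with h
      · exact mul_nonneg (hlam k) (by linarith)
      · exact le_refl 0
    have hSTsub : S - T = ∑ k, lam k * d k := by
      rw [hS, hT, ← Finset.sum_sub_distrib]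
      refine Finset.sum_congr rfl fun k _ => ?_
      rcases lt_trichotomy (d k) 0 with h | h | h
      · rw [if_neg (by linarith), if_pos h]; ring
      · rw [if_neg (by simp [h]), if_neg (by simp [h]), h]; ring
      · rw [if_pos h, if_neg (by linarith)]; ring
    have hSleT : S ≤ T := by linarith [hSTsub, hx]
    by_cases hTz : T = 0
    · have hSz : S = 0 := le_antisymm (hTz ▸ hSleT) hS0
      have hposlam : ∀ k, 0 < d k → lam k = 0 := by
        intro k hk
        have hterms := (Finset.sum_eq_zero_iff_of_nonneg (fun k _ => by
          split_ifs with h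
          · exact mul_nonneg (hlam k) h.le
          · exact le_refl 0)).mp hSz.symm.symm k (Finset.mem_univ k)
        rw [if_pos hk] at hterms
        exact (mul_eq_zero.mp hterms).resolve_right (ne_of_gt hk)
      refine ⟨Sum.elim lam 0, ?_, ?_⟩
      · rintro (k | p)
        · exact hlam k
        · exact le_refl 0
      · rw [Fintype.sum_sum_type]
        simp only [Sum.elim_inl, Sum.elim_inr, Pi.zero_apply, zero_smul,
          Finset.sum_const_zero, add_zero]
        refine Finset.sum_congr rfl fun k _ => ?_
        by_cases h : d k ≤ 0
        · rw [if_pos h]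
        · rw [hposlam k (lt_of_not_ge h)]; simp
    · have hTpos : 0 < T := lt_of_le_of_ne hT0 (Ne.symm hTz)
      refine ⟨Sum.elim
          (fun k => if d k < 0 then lam k * (1 - S / T) else if d k ≤ 0 then lam k else 0)
          (fun p => if 0 < d p.1 ∧ d p.2 < 0 then lam p.1 * lam p.2 / T else 0), ?_, ?_⟩
      · rintro (k | p)
        · simp only [Sum.elim_inl]
          split_ifs with h1 h2
          · apply mul_nonneg (hlam k)
            have : S / T ≤ 1 := (div_le_one hTpos).mpr hSleT
            linarith
          · exact hlam k
          · exact le_refl 0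
        · simp only [Sum.elim_inr]
          split_ifs with h1
          · exact div_nonneg (mul_nonneg (hlam _) (hlam _)) hT0
          · exact le_refl 0
      · rw [Fintype.sum_sum_type, Fintype.sum_prod_type]
        simp only [Sum.elim_inl, Sum.elim_inr]
        have hinl : ∀ k : ι,
            (if d k < 0 then lam k * (1 - S / T) else if d k ≤ 0 then lam k else 0) •
              (if d k ≤ 0 then w k else 0) =
            (if d k < 0 then lam k * (1 - S / T) else if d k ≤ 0 then lam k else 0) • w k := by
          intro k
          by_cases h : d k ≤ 0
          · simp only [if_pos h]
          · rw [if_neg (by linarith : ¬ d k < 0), if_neg h, if_neg h]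
            simp
        have hinr : ∀ k l : ι,
            (if 0 < d k ∧ d l < 0 then lam k * lam l / T else 0) •
              (if 0 < d k ∧ d l < 0 then (-(d l)) • w k + (d k) • w l else 0) =
            ((if 0 < d k then lam k / T else 0) * (if d l < 0 then lam l * (-(d l)) else 0)) • w k
            + ((if 0 < d k then lam k * d k else 0) * (if d l < 0 then lam l / T else 0)) • w l := by
          intro k l
          by_cases h : 0 < d k ∧ d l < 0
          · rw [if_pos h, if_pos h, if_pos h.1, if_pos h.2, if_pos h.1, if_pos h.2,
              smul_add, smul_smul, smul_smul]
            congr 1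
            · congr 1; ring
            · congr 1; ring
          · rw [if_neg h, if_neg h, smul_zero]
            rcases not_and_or.mp h with h1 | h1
            · rw [if_neg h1, if_neg h1]; simp
            · rw [if_neg h1, if_neg h1]; simp
        rw [Finset.sum_congr rfl fun k _ => hinl k,
          Finset.sum_congr rfl fun k _ => Finset.sum_congr rfl fun l _ => hinr k l]
        simp only [Finset.sum_add_distrib]
        have h1 : ∀ k : ι, ∑ l : ι,
            ((if 0 < d k then lam k / T else 0) * (if d l < 0 then lam l * (-(d l)) else 0)) • w k
            = ((if 0 < d k then lam k else 0)) • w k := by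
          intro k
          rw [← Finset.sum_smul, ← Finset.mul_sum, ← hT]
          congr 1
          by_cases h : 0 < d k
          · rw [if_pos h, if_pos h, div_mul_cancel₀ _ hTz]
          · rw [if_neg h, if_neg h, zero_mul]
        have h2 : ∑ k : ι, ∑ l : ι,
            ((if 0 < d k then lam k * d k else 0) * (if d l < 0 then lam l / T else 0)) • w l
            = ∑ l : ι, (if d l < 0 then lam l * (S / T) else 0) • w l := by
          rw [Finset.sum_comm]
          refine Finset.sum_congr rfl fun l _ => ?_
          rw [← Finset.sum_smul, ← Finset.sum_mul, ← hS]
          congr 1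
          by_cases h : d l < 0
          · rw [if_pos h, if_pos h]; ring
          · rw [if_neg h, if_neg h, mul_zero]
        rw [Finset.sum_congr rfl fun k _ => h1 k, h2, ← Finset.sum_add_distrib,
          ← Finset.sum_add_distrib]
        refine Finset.sum_congr rfl fun k _ => ?_
        rw [← add_smul, ← add_smul]
        congr 1
        rcases lt_trichotomy (d k) 0 with h | h | h
        · rw [if_pos h, if_neg (by linarith : ¬ 0 < d k), if_pos h]
          field_simp
          ring
        · rw [if_neg (by simp [h]), if_pos (by simp [h]), if_neg (by simp [h]),
            if_neg (by simp [h])]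
          ring
        · rw [if_neg (by linarith : ¬ d k < 0), if_neg (by linarith : ¬ d k ≤ 0),
            if_pos h, if_neg (by linarith : ¬ d k < 0)]
          ring
  · intro x hxmem
    constructor
    · refine coneOf'_subset ?_ hxmem
      rintro (k | ⟨k, l⟩)
      · dsimp only [Sum.elim_inl]
        split_ifs
        · exact gen_mem_coneOf' w k
        · exact zero_mem_coneOf' w
      · dsimp only [Sum.elim_inr]
        split_ifs with h
        · exact add_mem_coneOf' (smul_mem_coneOf' (by linarith [h.2]) (gen_mem_coneOf' w k))
            (smul_mem_coneOf' h.1.le (gen_mem_coneOf' w l))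
        · exact zero_mem_coneOf' w
    · obtain ⟨mu, hmu, rfl⟩ := hxmem
      rw [Set.mem_setOf_eq, dotp_sum_left]
      apply Finset.sum_nonpos
      intro j _
      refine mul_nonpos_iff.mpr (Or.inl ⟨hmu j, ?_⟩)
      rcases j with k | ⟨k, l⟩
      · simp only [Sum.elim_inl]
        split_ifs with h
        · exact h
        · rw [dotp_zero_left]
      · simp only [Sum.elim_inr]
        split_ifs with h
        · rw [dotp_add_left, dotp_smul_left, dotp_smul_left]
          nlinarith [h.1, h.2]
        · rw [dotp_zero_left]


def intCut {n : ℕ} {ι : Type} (W : ι → Fin n → ℤ) (A : Fin n → ℤ) : ι ⊕ ι × ι → Fin n → ℤ :=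
  Sum.elim (fun k => if (∑ i, W k i * A i) ≤ 0 then W k else 0)
    (fun p => if 0 < (∑ i, W p.1 i * A i) ∧ (∑ i, W p.2 i * A i) < 0 then
      (fun i => (-(∑ i', W p.2 i' * A i')) * W p.1 i + (∑ i', W p.1 i' * A i') * W p.2 i) else 0)

lemma dotp_intCast (x y : Fin n → ℤ) :
    dotp (intCastVec x) (intCastVec y) = ((∑ i, x i * y i : ℤ) : ℝ) := by
  unfold dotp intCastVec
  push_cast
  rfl

lemma intCastVec_zero : intCastVec (0 : Fin n → ℤ) = 0 := by
  funext i; simp [intCastVec]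

lemma intCut_cast {ι : Type} [Fintype ι] (W : ι → Fin n → ℤ) (A : Fin n → ℤ) :
    (fun j => intCastVec (intCut W A j)) =
      (Sum.elim
        (fun k => if dotp (intCastVec (W k)) (intCastVec A) ≤ 0 then intCastVec (W k) else 0)
        (fun p : ι × ι => if 0 < dotp (intCastVec (W p.1)) (intCastVec A) ∧
              dotp (intCastVec (W p.2)) (intCastVec A) < 0 then
            (-(dotp (intCastVec (W p.2)) (intCastVec A))) • intCastVec (W p.1)
              + (dotp (intCastVec (W p.1)) (intCastVec A)) • intCastVec (W p.2) else 0)) := by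
  funext j
  rcases j with k | ⟨k, l⟩
  · simp only [intCut, Sum.elim_inl, dotp_intCast]
    by_cases h : (∑ i, W k i * A i) ≤ 0
    · rw [if_pos h, if_pos (by exact_mod_cast h)]
    · rw [if_neg h, if_neg (by exact_mod_cast h), intCastVec_zero]
  · simp only [intCut, Sum.elim_inr, dotp_intCast]
    by_cases h : 0 < (∑ i, W k i * A i) ∧ (∑ i, W l i * A i) < 0
    · rw [if_pos h, if_pos ⟨by exact_mod_cast h.1, by exact_mod_cast h.2⟩]
      funext i
      simp only [intCastVec, Pi.add_apply, Pi.smul_apply, smul_eq_mul]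
      push_cast
      ring
    · rw [if_neg h, if_neg (fun hc => h ⟨by exact_mod_cast hc.1, by exact_mod_cast hc.2⟩),
        intCastVec_zero]

lemma polar_coneOf' {ι : Type} [Fintype ι] (w : ι → Fin n → ℝ) :
    polarCone (coneOf' w) = {x | ∀ j, dotp x (w j) ≤ 0} := by
  ext x
  constructor
  · intro h j
    exact h (w j) (gen_mem_coneOf' w j)
  · rintro h y ⟨lam, hlam, rfl⟩
    rw [dotp_comm, dotp_sum_left]
    apply Finset.sum_nonpos
    intro j _
    exact mul_nonpos_iff.mpr (Or.inl ⟨hlam j, by rw [dotp_comm]; exact h j⟩)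

lemma univ_cone :
    (Set.univ : Set (Fin n → ℝ)) = coneOf' (fun j : Fin n ⊕ Fin n =>
      intCastVec (Sum.elim (fun i => Pi.single i (1:ℤ)) (fun i => -Pi.single i 1) j)) := by
  ext x
  simp only [Set.mem_univ, true_iff]
  refine ⟨Sum.elim (fun i => max (x i) 0) (fun i => max (-x i) 0), ?_, ?_⟩
  · rintro (i | i) <;> simp [le_max_right]
  · rw [Fintype.sum_sum_type]
    funext i
    simp only [Finset.sum_apply, Pi.add_apply, Pi.smul_apply, smul_eq_mul,
      Sum.elim_inl, Sum.elim_inr, intCastVec, Pi.single_apply, Pi.neg_apply]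
    push_cast
    simp only [mul_ite, mul_one, mul_neg, mul_zero, neg_zero, Finset.sum_neg_distrib,
      Finset.sum_ite_eq, Finset.mem_univ, if_true]
    rcases le_total (x i) 0 with h | h
    · rw [max_eq_right h, max_eq_left (by linarith)]
      ring
    · rw [max_eq_left h, max_eq_right (by linarith)]
      ring

lemma key (s : ℕ) (a : Fin s → Fin n → ℤ) :
    ∃ (r : ℕ) (u : Fin r → Fin n → ℤ),
      {x : Fin n → ℝ | ∀ j, dotp x (intCastVec (a j)) ≤ 0} = coneOf fun j => intCastVec (u j) := by
  induction s with
  | zero =>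
    refine ⟨n + n, fun j => Sum.elim (fun i => Pi.single i (1:ℤ)) (fun i => -Pi.single i 1)
      (finSumFinEquiv.symm j), ?_⟩
    have h0 : {x : Fin n → ℝ | ∀ j : Fin 0, dotp x (intCastVec (a j)) ≤ 0} = Set.univ := by
      ext x; simp
    rw [h0]
    calc (Set.univ : Set (Fin n → ℝ))
        = coneOf' (fun j : Fin n ⊕ Fin n =>
            intCastVec (Sum.elim (fun i => Pi.single i (1:ℤ)) (fun i => -Pi.single i 1) j)) :=
          univ_cone
      _ = coneOf (fun j : Fin (n + n) =>
            intCastVec (Sum.elim (fun i => Pi.single i (1:ℤ)) (fun i => -Pi.single i 1)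
              (finSumFinEquiv.symm j))) :=
          (coneOf'_reindex _ finSumFinEquiv.symm).symm
  | succ s ih =>
    obtain ⟨r, u, hu⟩ := ih (fun j => a j.castSucc)
    refine ⟨r + r * r, fun j => intCut u (a (Fin.last s)) ((finSumFinEquiv.symm.trans
        (Equiv.sumCongr (Equiv.refl (Fin r)) finProdFinEquiv.symm)) j), ?_⟩
    have hsplit : {x : Fin n → ℝ | ∀ j, dotp x (intCastVec (a j)) ≤ 0}
        = coneOf' (fun j => intCastVec (u j)) ∩ {x | dotp x (intCastVec (a (Fin.last s))) ≤ 0} := by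
      ext x
      constructor
      · intro h
        refine ⟨?_, h (Fin.last s)⟩
        have hx : x ∈ {x : Fin n → ℝ | ∀ j : Fin s,
            dotp x (intCastVec (a j.castSucc)) ≤ 0} := fun j => h j.castSucc
        rw [hu] at hx
        exact hx
      · rintro ⟨h1, h2⟩ j
        induction j using Fin.lastCases with
        | last => exact h2
        | cast i =>
          have hx : x ∈ {x : Fin n → ℝ | ∀ j : Fin s,
              dotp x (intCastVec (a j.castSucc)) ≤ 0} := by
            rw [hu]; exact h1
          exact hx i
    calc {x : Fin n → ℝ | ∀ j, dotp x (intCastVec (a j)) ≤ 0}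
        = coneOf' (fun j => intCastVec (u j)) ∩
            {x | dotp x (intCastVec (a (Fin.last s))) ≤ 0} := hsplit
      _ = coneOf' (Sum.elim
            (fun k => if dotp (intCastVec (u k)) (intCastVec (a (Fin.last s))) ≤ 0 then
                intCastVec (u k) else 0)
            (fun p : Fin r × Fin r =>
              if 0 < dotp (intCastVec (u p.1)) (intCastVec (a (Fin.last s))) ∧
                  dotp (intCastVec (u p.2)) (intCastVec (a (Fin.last s))) < 0 then
                (-(dotp (intCastVec (u p.2)) (intCastVec (a (Fin.last s))))) • intCastVec (u p.1)
                  + (dotp (intCastVec (u p.1)) (intCastVec (a (Fin.last s)))) • intCastVec (u p.2)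
              else 0)) := cut (fun j => intCastVec (u j)) (intCastVec (a (Fin.last s)))
      _ = coneOf' (fun j => intCastVec (intCut u (a (Fin.last s)) j)) := by
          rw [intCut_cast]
      _ = coneOf (fun j : Fin (r + r * r) =>
            intCastVec (intCut u (a (Fin.last s)) ((finSumFinEquiv.symm.trans
              (Equiv.sumCongr (Equiv.refl (Fin r)) finProdFinEquiv.symm)) j))) :=
          (coneOf'_reindex _ (finSumFinEquiv.symm.trans
            (Equiv.sumCongr (Equiv.refl (Fin r)) finProdFinEquiv.symm))).symm

end Aux

/-- The polar cone of a rational polyhedral cone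
`σ = Cone(v_1, …, v_s)` with `v_j ∈ ℤⁿ` is again a rational polyhedral cone: there are
finitely many `u_1, …, u_r ∈ ℤⁿ` with `σ∨ = Cone(u_1, …, u_r)`. -/
theorem stmt5 {n s : ℕ} (v : Fin s → (Fin n → ℤ)) (σ : Set (Fin n → ℝ))
    (hσ : σ = coneOf fun j => intCastVec (v j)) :
    ∃ (r : ℕ) (u : Fin r → (Fin n → ℤ)),
      polarCone σ = coneOf fun j => intCastVec (u j) := by
  subst hσ
  obtain ⟨r, u, hu⟩ := Aux.key s v
  refine ⟨r, u, ?_⟩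
  have hp : polarCone (coneOf fun j => intCastVec (v j))
      = {x : Fin n → ℝ | ∀ j, dotp x (intCastVec (v j)) ≤ 0} :=
    Aux.polar_coneOf' fun j => intCastVec (v j)
  rw [hp]
  exact hu

end
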